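/- The natural homomorphisms G₁ → G₁ *_H G₂ and G₂ → G₁ *_H G₂ into an amalgamated free product are injective. -/
import Mathlib

/-- The amalgamated free product `G₁ *_H G₂`, presented as the quotient of the free
product `G₁ ∗ G₂` by the normal closure of the relations `i₁(h) = i₂(h)`, `h ∈ H`. -/
def Amalgam {G₁ G₂ H : Type*} [Group G₁] [Group G₂] [Group H]
    (i₁ : H →* G₁) (i₂ : H →* G₂) : Type _ :=
  (Monoid.Coprod G₁ G₂) ⧸ Subgroup.normalClosure
    {x | ∃ h : H, x = Monoid.Coprod.inl (i₁ h) * (Monoid.Coprod.inr (i₂ h))⁻¹}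

instance {G₁ G₂ H : Type*} [Group G₁] [Group G₂] [Group H]
    (i₁ : H →* G₁) (i₂ : H →* G₂) : Group (Amalgam i₁ i₂) :=
  QuotientGroup.Quotient.group _

/-- The natural homomorphism `G₁ → G₁ *_H G₂`. -/
def Amalgam.inl {G₁ G₂ H : Type*} [Group G₁] [Group G₂] [Group H]
    (i₁ : H →* G₁) (i₂ : H →* G₂) : G₁ →* Amalgam i₁ i₂ :=
  (QuotientGroup.mk' _).comp Monoid.Coprod.inl

/-- The natural homomorphism `G₂ → G₁ *_H G₂`. -/
def Amalgam.inr {G₁ G₂ H : Type*} [Group G₁] [Group G₂] [Group H]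
    (i₁ : H →* G₁) (i₂ : H →* G₂) : G₂ →* Amalgam i₁ i₂ :=
  (QuotientGroup.mk' _).comp Monoid.Coprod.inr

section Aux

universe u v w

variable {G₁ : Type u} {G₂ : Type v} {H : Type w} [Group G₁] [Group G₂] [Group H]
    (i₁ : H →* G₁) (i₂ : H →* G₂)

/-- The family of groups indexed by `Bool`. -/
def AmalgamAux.G (G₁ : Type u) (G₂ : Type v) : Bool → Type (max u v)
  | true => ULift G₁
  | false => ULift G₂

instance AmalgamAux.instGroup : ∀ b, Group (AmalgamAux.G G₁ G₂ b)
  | true => ULift.group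
  | false => ULift.group

/-- The family of maps. -/
def AmalgamAux.φ : ∀ b, H →* AmalgamAux.G G₁ G₂ b
  | true => (MulEquiv.ulift.symm.toMonoidHom : G₁ →* ULift G₁).comp i₁
  | false => (MulEquiv.ulift.symm.toMonoidHom : G₂ →* ULift G₂).comp i₂

/-- The map from the free product to the pushout. -/
def AmalgamAux.toPushout : Monoid.Coprod G₁ G₂ →* Monoid.PushoutI (AmalgamAux.φ i₁ i₂) :=
  Monoid.Coprod.lift
    ((Monoid.PushoutI.of (φ := AmalgamAux.φ i₁ i₂) true).comp
      (MulEquiv.ulift.symm.toMonoidHom : G₁ →* ULift G₁))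
    ((Monoid.PushoutI.of (φ := AmalgamAux.φ i₁ i₂) false).comp
      (MulEquiv.ulift.symm.toMonoidHom : G₂ →* ULift G₂))

/-- The induced map from the amalgam to the pushout. -/
def AmalgamAux.fromAmalgam : Amalgam i₁ i₂ →* Monoid.PushoutI (AmalgamAux.φ i₁ i₂) :=
  QuotientGroup.lift _ (AmalgamAux.toPushout i₁ i₂) (by
    refine Subgroup.normalClosure_le_normal ?_
    rintro x ⟨h, rfl⟩
    simp only [SetLike.mem_coe, MonoidHom.mem_ker, map_mul, map_inv,
      AmalgamAux.toPushout, Monoid.Coprod.lift_apply_inl, Monoid.Coprod.lift_apply_inr,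
      MonoidHom.comp_apply]
    show (Monoid.PushoutI.of (φ := AmalgamAux.φ i₁ i₂) true) (AmalgamAux.φ i₁ i₂ true h) *
        ((Monoid.PushoutI.of (φ := AmalgamAux.φ i₁ i₂) false) (AmalgamAux.φ i₁ i₂ false h))⁻¹ = 1
    rw [Monoid.PushoutI.of_apply_eq_base, Monoid.PushoutI.of_apply_eq_base, mul_inv_cancel])

end Aux

/-- The natural homomorphisms of the factors into an amalgamated free product are
injective. -/
theorem amalgam_factors_embed {G₁ G₂ H : Type*} [Group G₁] [Group G₂] [Group H]
    (i₁ : H →* G₁) (i₂ : H →* G₂)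
    (h₁ : Function.Injective i₁) (h₂ : Function.Injective i₂) :
    Function.Injective (Amalgam.inl i₁ i₂) ∧ Function.Injective (Amalgam.inr i₁ i₂) := by
  have hφ : ∀ b, Function.Injective (AmalgamAux.φ i₁ i₂ b) := by
    rintro (_ | _)
    · exact fun a b hab => h₂ (congrArg ULift.down hab)
    · exact fun a b hab => h₁ (congrArg ULift.down hab)
  constructor
  · have key : ∀ g : G₁, AmalgamAux.fromAmalgam i₁ i₂ (Amalgam.inl i₁ i₂ g) =
        Monoid.PushoutI.of (φ := AmalgamAux.φ i₁ i₂) true (MulEquiv.ulift.symm g) := fun g => by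
      show AmalgamAux.toPushout i₁ i₂ (Monoid.Coprod.inl g) = _
      simp only [AmalgamAux.toPushout, Monoid.Coprod.lift_apply_inl,
        Monoid.Coprod.lift_apply_inr, MonoidHom.comp_apply]
      rfl
    intro a b hab
    have h := congrArg (AmalgamAux.fromAmalgam i₁ i₂) hab
    rw [key, key] at h
    exact MulEquiv.ulift.symm.injective (Monoid.PushoutI.of_injective hφ true h)
  · have key : ∀ g : G₂, AmalgamAux.fromAmalgam i₁ i₂ (Amalgam.inr i₁ i₂ g) =
        Monoid.PushoutI.of (φ := AmalgamAux.φ i₁ i₂) false (MulEquiv.ulift.symm g) := fun g => by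
      show AmalgamAux.toPushout i₁ i₂ (Monoid.Coprod.inr g) = _
      simp only [AmalgamAux.toPushout, Monoid.Coprod.lift_apply_inl,
        Monoid.Coprod.lift_apply_inr, MonoidHom.comp_apply]
      rfl
    intro a b hab
    have h := congrArg (AmalgamAux.fromAmalgam i₁ i₂) hab
    rw [key, key] at h
    exact MulEquiv.ulift.symm.injective (Monoid.PushoutI.of_injective hφ false h)
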